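/- Under the exchangeable Gaussian model with common correlation ρ ∈ (0,1), the truncated estimator ρ̂ = (1 - s_n^2)·I(s_n^2 < 1) converges in probability to ρ as n → ∞. -/

import Mathlib

open MeasureTheory ProbabilityTheory Real Filter
open scoped ENNReal NNReal

/-- Unbiased sample variance of an `n`-tuple of reals. -/
noncomputable def sampleVar (n : ℕ) (x : Fin n → ℝ) : ℝ :=
  (1 / ((n : ℝ) - 1)) * ∑ i, (x i - (∑ j, x j) / n) ^ 2

/-- The exchangeable standard Gaussian model, given through its one-factor
representation: `X i = √ρ · Z 0 + √(1-ρ) · Z (i+1)` for `Z` i.i.d. `N(0,1)`,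
which yields a jointly normal vector with mean `0`, unit variances and
common pairwise correlation `ρ` (covariance `(1-ρ)·I + ρ·J`). -/
def IsEquicorrGaussian {Ω : Type*} [MeasureSpace Ω] (n : ℕ) (ρ : ℝ)
    (X : Fin n → Ω → ℝ) : Prop :=
  ∃ Z : ℕ → Ω → ℝ,
    iIndepFun Z ℙ ∧
    (∀ i, Measure.map (Z i) ℙ = gaussianReal 0 1) ∧
    (∀ i, Measurable (Z i)) ∧
    (∀ i ω, X i ω = Real.sqrt ρ * Z 0 ω + Real.sqrt (1 - ρ) * Z (i + 1) ω)

/-! ### Auxiliary calculus lemmas -/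

lemma ega_intA {b : ℝ} (hb : 0 < b) : ∫ x : ℝ, x * Real.exp (-b * x ^ 2) = 0 := by
  have hderiv : ∀ x : ℝ, HasDerivAt (fun x : ℝ => -(1/(2*b)) * Real.exp (-b * x ^ 2))
      (x * Real.exp (-b * x ^ 2)) x := by
    intro x
    have h1 : HasDerivAt (fun x : ℝ => -b * x ^ 2) (-b * (2 * x)) x := by
      simpa using ((hasDerivAt_pow 2 x).const_mul (-b))
    have h2 := (h1.exp).const_mul (-(1/(2*b)))
    refine h2.congr_deriv ?_
    have hbb : b * b⁻¹ = 1 := mul_inv_cancel₀ hb.ne'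
    linear_combination (x * Real.exp (-b * x ^ 2)) * hbb
  have hint : Integrable (fun x : ℝ => x * Real.exp (-b * x ^ 2)) :=
    integrable_mul_exp_neg_mul_sq hb
  have htop : Tendsto (fun x : ℝ => -(1/(2*b)) * Real.exp (-b * x ^ 2)) atTop (nhds 0) := by
    have : Tendsto (fun x : ℝ => -b * x ^ 2) atTop atBot := by
      apply Tendsto.const_mul_atTop_of_neg (neg_neg_iff_pos.mpr hb)
      exact tendsto_pow_atTop (by norm_num)
    simpa using (Real.tendsto_exp_atBot.comp this).const_mul (-(1/(2*b)))
  have hbot : Tendsto (fun x : ℝ => -(1/(2*b)) * Real.exp (-b * x ^ 2)) atBot (nhds 0) := by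
    have hsq : Tendsto (fun x : ℝ => x ^ 2) atBot atTop := by
      have := (tendsto_pow_atTop (two_ne_zero)).comp tendsto_neg_atBot_atTop (α := ℝ)
      simpa [Function.comp_def, neg_pow] using this
    have : Tendsto (fun x : ℝ => -b * x ^ 2) atBot atBot :=
      hsq.const_mul_atTop_of_neg (neg_neg_iff_pos.mpr hb)
    simpa using (Real.tendsto_exp_atBot.comp this).const_mul (-(1/(2*b)))
  have := MeasureTheory.integral_of_hasDerivAt_of_tendsto hderiv hint hbot htop
  simpa using this

lemma ega_int_sq_exp {b : ℝ} (hb : 0 < b) :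
    Integrable (fun x : ℝ => x ^ 2 * Real.exp (-b * x ^ 2)) := by
  have := integrable_rpow_mul_exp_neg_mul_sq hb (s := 2) (by norm_num)
  have h2 : ∀ x : ℝ, x ^ (2:ℝ) = x ^ (2:ℕ) := fun x => by
    rw [show ((2:ℝ)) = ((2:ℕ):ℝ) by norm_num, Real.rpow_natCast]
  simpa [h2] using this

lemma ega_int_pow4_exp {b : ℝ} (hb : 0 < b) :
    Integrable (fun x : ℝ => x ^ 4 * Real.exp (-b * x ^ 2)) := by
  have := integrable_rpow_mul_exp_neg_mul_sq hb (s := 4) (by norm_num)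
  have h2 : ∀ x : ℝ, x ^ (4:ℝ) = x ^ (4:ℕ) := fun x => by
    rw [show ((4:ℝ)) = ((4:ℕ):ℝ) by norm_num, Real.rpow_natCast]
  simpa [h2] using this

lemma ega_tendsto_mul_exp_top {b : ℝ} (hb : 0 < b) :
    Tendsto (fun x : ℝ => x * Real.exp (-b * x ^ 2)) atTop (nhds 0) := by
  have hlo := rpow_mul_exp_neg_mul_sq_isLittleO_exp_neg hb 1
  have h0 : Tendsto (fun x : ℝ => Real.exp (-(1/2) * x)) atTop (nhds 0) := by
    have hneg : Tendsto (fun x : ℝ => -(1/2) * x) atTop atBot :=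
      Tendsto.const_mul_atTop_of_neg (by norm_num) tendsto_id
    simpa [Function.comp_def] using Real.tendsto_exp_atBot.comp hneg
  have h1 : Tendsto (fun x : ℝ => x ^ (1:ℝ) * Real.exp (-b * x ^ 2)) atTop (nhds 0) :=
    hlo.trans_tendsto h0
  apply h1.congr'
  filter_upwards [eventually_gt_atTop (0:ℝ)] with x hx
  rw [Real.rpow_one]

lemma ega_tendsto_mul_exp_bot {b : ℝ} (hb : 0 < b) :
    Tendsto (fun x : ℝ => x * Real.exp (-b * x ^ 2)) atBot (nhds 0) := by
  have h := ((ega_tendsto_mul_exp_top hb).comp tendsto_neg_atBot_atTop).neg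
  simp only [Function.comp_def, neg_neg, neg_zero] at h
  apply h.congr
  intro x; ring_nf

lemma ega_intB {b : ℝ} (hb : 0 < b) :
    ∫ x : ℝ, x ^ 2 * Real.exp (-b * x ^ 2) = (1/(2*b)) * Real.sqrt (π / b) := by
  set c : ℝ := 1/(2*b) with hc
  have hderiv : ∀ x : ℝ, HasDerivAt (fun x : ℝ => -c * (x * Real.exp (-b * x ^ 2)))
      (x ^ 2 * Real.exp (-b * x ^ 2) - c * Real.exp (-b * x ^ 2)) x := by
    intro x
    have h1 : HasDerivAt (fun x : ℝ => -b * x ^ 2) (-b * (2 * x)) x := by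
      simpa using ((hasDerivAt_pow 2 x).const_mul (-b))
    have h2 : HasDerivAt (fun x : ℝ => x * Real.exp (-b * x ^ 2))
        (1 * Real.exp (-b * x ^ 2) + x * (Real.exp (-b * x ^ 2) * (-b * (2 * x)))) x :=
      (hasDerivAt_id x).mul h1.exp
    have h3 := h2.const_mul (-c)
    refine h3.congr_deriv ?_
    have hbb : b * b⁻¹ = 1 := mul_inv_cancel₀ hb.ne'
    rw [hc]
    linear_combination (x ^ 2 * Real.exp (-b * x ^ 2)) * hbb
  have hint : Integrable (fun x : ℝ => x ^ 2 * Real.exp (-b * x ^ 2) - c * Real.exp (-b * x ^ 2)) :=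
    (ega_int_sq_exp hb).sub ((integrable_exp_neg_mul_sq hb).const_mul c)
  have htop : Tendsto (fun x : ℝ => -c * (x * Real.exp (-b * x ^ 2))) atTop (nhds 0) := by
    simpa using (ega_tendsto_mul_exp_top hb).const_mul (-c)
  have hbot : Tendsto (fun x : ℝ => -c * (x * Real.exp (-b * x ^ 2))) atBot (nhds 0) := by
    simpa using (ega_tendsto_mul_exp_bot hb).const_mul (-c)
  have h0 := MeasureTheory.integral_of_hasDerivAt_of_tendsto hderiv hint hbot htop
  rw [integral_sub (ega_int_sq_exp hb) ((integrable_exp_neg_mul_sq hb).const_mul c)] at h0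
  rw [integral_const_mul, integral_gaussian] at h0
  have := sub_eq_zero.mp (by linarith [h0] :
    (∫ x : ℝ, x ^ 2 * Real.exp (-b * x ^ 2)) - c * Real.sqrt (π / b) = 0)
  linarith [this]

/-! ### Gaussian moment facts -/

lemma ega_pdf01 (x : ℝ) :
    gaussianPDFReal 0 1 x = (Real.sqrt (2*π))⁻¹ * Real.exp (-(1/2) * x^2) := by
  rw [gaussianPDFReal]
  norm_num
  left
  congr 1
  ring

lemma ega_sqrt2pi_pos : 0 < Real.sqrt (2*π) := Real.sqrt_pos.mpr (by positivity)

lemma ega_gauss_integral (g : ℝ → ℝ) :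
    ∫ x, g x ∂(gaussianReal 0 1) = ∫ x, gaussianPDFReal 0 1 x * g x := by
  rw [gaussianReal_of_var_ne_zero 0 one_ne_zero]
  have hmeas : Measurable (fun x => (gaussianPDFReal 0 1 x).toNNReal) :=
    (measurable_gaussianPDFReal 0 1).real_toNNReal
  have heq : (gaussianPDF 0 1) = fun x => ((gaussianPDFReal 0 1 x).toNNReal : ℝ≥0∞) := rfl
  rw [heq, integral_withDensity_eq_integral_smul hmeas]
  congr 1
  ext x
  simp [NNReal.smul_def, Real.coe_toNNReal _ (gaussianPDFReal_nonneg 0 1 x)]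

lemma ega_gauss_integrable (g : ℝ → ℝ)
    (hg : Integrable (fun x => gaussianPDFReal 0 1 x * g x)) :
    Integrable g (gaussianReal 0 1) := by
  rw [gaussianReal_of_var_ne_zero 0 one_ne_zero]
  have hmeas : Measurable (fun x => (gaussianPDFReal 0 1 x).toNNReal) :=
    (measurable_gaussianPDFReal 0 1).real_toNNReal
  have heq : (gaussianPDF 0 1) = fun x => ((gaussianPDFReal 0 1 x).toNNReal : ℝ≥0∞) := rfl
  rw [heq, integrable_withDensity_iff_integrable_smul hmeas]
  apply hg.congr
  filter_upwards with x
  simp [NNReal.smul_def, Real.coe_toNNReal _ (gaussianPDFReal_nonneg 0 1 x)]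

lemma ega_gauss_int_sq : Integrable (fun x : ℝ => x^2) (gaussianReal 0 1) := by
  apply ega_gauss_integrable
  have h := (ega_int_sq_exp (b := (1/2:ℝ)) (by norm_num)).const_mul (Real.sqrt (2*π))⁻¹
  apply h.congr
  filter_upwards with x
  rw [ega_pdf01]
  ring

lemma ega_gauss_int_pow4 : Integrable (fun x : ℝ => x^4) (gaussianReal 0 1) := by
  apply ega_gauss_integrable
  have h := (ega_int_pow4_exp (b := (1/2:ℝ)) (by norm_num)).const_mul (Real.sqrt (2*π))⁻¹
  apply h.congr
  filter_upwards with x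
  rw [ega_pdf01]
  ring

lemma ega_gauss_mean : ∫ x, x ∂(gaussianReal 0 1) = 0 := by
  rw [ega_gauss_integral]
  have h : ∀ x : ℝ, gaussianPDFReal 0 1 x * x
      = (Real.sqrt (2*π))⁻¹ * (x * Real.exp (-(1/2) * x^2)) := by
    intro x; rw [ega_pdf01]; ring
  simp_rw [h]
  rw [integral_const_mul, ega_intA (by norm_num : (0:ℝ) < 1/2)]
  ring

lemma ega_gauss_sq_mean : ∫ x, x^2 ∂(gaussianReal 0 1) = 1 := by
  rw [ega_gauss_integral]
  have h : ∀ x : ℝ, gaussianPDFReal 0 1 x * x^2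
      = (Real.sqrt (2*π))⁻¹ * (x^2 * Real.exp (-(1/2) * x^2)) := by
    intro x; rw [ega_pdf01]; ring
  simp_rw [h]
  rw [integral_const_mul, ega_intB (by norm_num : (0:ℝ) < 1/2)]
  rw [show π / (1/2:ℝ) = 2*π by ring]
  rw [inv_mul_eq_div, div_eq_one_iff_eq ega_sqrt2pi_pos.ne']
  norm_num

/-- Fourth moment of the standard gaussian. -/
noncomputable def ega_m4 : ℝ := ∫ x, x^4 ∂(gaussianReal 0 1)

lemma ega_gauss_memℒp_sq : MemLp (fun x : ℝ => x^2) 2 (gaussianReal 0 1) := by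
  rw [memLp_two_iff_integrable_sq (continuous_pow 2).aestronglyMeasurable]
  apply ega_gauss_int_pow4.congr
  filter_upwards with x
  ring

lemma ega_m4_ge_one : 1 ≤ ega_m4 := by
  have hv := variance_nonneg (fun x : ℝ => x^2) (gaussianReal 0 1)
  rw [variance_eq_sub ega_gauss_memℒp_sq] at hv
  have h1 : (gaussianReal 0 1)[(fun x : ℝ => x^2)^2] = ega_m4 := by
    rw [ega_m4]
    congr 1
    ext x
    simp
    ring
  have h2 : (gaussianReal 0 1)[fun x : ℝ => x^2] = 1 := ega_gauss_sq_mean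
  rw [h1, h2] at hv
  linarith

/-! ### Random-variable level facts -/

section RV
variable {Ω : Type*} [MeasureSpace Ω] [IsProbabilityMeasure (ℙ : Measure Ω)]

lemma ega_map_int {W : Ω → ℝ} (hm : Measurable W) (hmap : Measure.map W ℙ = gaussianReal 0 1)
    (g : ℝ → ℝ) (hg : AEStronglyMeasurable g (gaussianReal 0 1)) :
    ∫ ω, g (W ω) ∂ℙ = ∫ x, g x ∂(gaussianReal 0 1) := by
  rw [← hmap] at hg ⊢
  rw [integral_map hm.aemeasurable hg]

omit [IsProbabilityMeasure (ℙ : Measure Ω)] in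
lemma ega_W_memℒp2 {W : Ω → ℝ} (hm : Measurable W) (hmap : Measure.map W ℙ = gaussianReal 0 1) :
    MemLp W 2 ℙ := by
  have h1 : MemLp (id : ℝ → ℝ) 2 (gaussianReal 0 1) := by
    rw [memLp_two_iff_integrable_sq aestronglyMeasurable_id]
    exact ega_gauss_int_sq.congr (by filter_upwards with x; simp)
  rw [← hmap] at h1
  exact (memLp_map_measure_iff aestronglyMeasurable_id hm.aemeasurable).mp h1

omit [IsProbabilityMeasure (ℙ : Measure Ω)] in
lemma ega_Wsq_memℒp2 {W : Ω → ℝ} (hm : Measurable W)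
    (hmap : Measure.map W ℙ = gaussianReal 0 1) :
    MemLp (fun ω => W ω ^ 2) 2 ℙ := by
  have h1 : MemLp (fun x : ℝ => x^2) 2 (gaussianReal 0 1) := ega_gauss_memℒp_sq
  rw [← hmap] at h1
  exact (memLp_map_measure_iff (continuous_pow 2).aestronglyMeasurable hm.aemeasurable).mp h1

lemma ega_W_mean {W : Ω → ℝ} (hm : Measurable W) (hmap : Measure.map W ℙ = gaussianReal 0 1) :
    ∫ ω, W ω ∂ℙ = 0 := by
  have := ega_map_int hm hmap id aestronglyMeasurable_id
  simpa [ega_gauss_mean] using this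

lemma ega_Wsq_mean {W : Ω → ℝ} (hm : Measurable W) (hmap : Measure.map W ℙ = gaussianReal 0 1) :
    ∫ ω, W ω ^ 2 ∂ℙ = 1 := by
  have := ega_map_int hm hmap (fun x => x^2) (continuous_pow 2).aestronglyMeasurable
  simpa [ega_gauss_sq_mean] using this

lemma ega_Wp4_mean {W : Ω → ℝ} (hm : Measurable W) (hmap : Measure.map W ℙ = gaussianReal 0 1) :
    ∫ ω, W ω ^ 4 ∂ℙ = ega_m4 := by
  have := ega_map_int hm hmap (fun x => x^4) (continuous_pow 4).aestronglyMeasurable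
  simpa [ega_m4] using this

lemma ega_W_var {W : Ω → ℝ} (hm : Measurable W) (hmap : Measure.map W ℙ = gaussianReal 0 1) :
    variance W ℙ = 1 := by
  rw [variance_eq_sub (ega_W_memℒp2 hm hmap)]
  have h1 : ℙ[W^2] = 1 := by
    have := ega_Wsq_mean hm hmap
    simpa [Pi.pow_apply] using this
  have h2 : ℙ[W] = 0 := ega_W_mean hm hmap
  rw [h1, h2]
  norm_num

lemma ega_Wsq_var {W : Ω → ℝ} (hm : Measurable W) (hmap : Measure.map W ℙ = gaussianReal 0 1) :
    variance (fun ω => W ω ^ 2) ℙ = ega_m4 - 1 := by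
  rw [variance_eq_sub (ega_Wsq_memℒp2 hm hmap)]
  have h1 : ℙ[(fun ω => W ω ^ 2)^2] = ega_m4 := by
    have := ega_Wp4_mean hm hmap
    rw [← this]
    congr 1
    ext ω
    simp
    ring
  have h2 : ℙ[fun ω => W ω ^ 2] = 1 := ega_Wsq_mean hm hmap
  rw [h1, h2]
  norm_num

end RV

/-! ### Deterministic sample-variance algebra -/

lemma ega_sampleVar_shift (n : ℕ) (a c : ℝ) (w : Fin n → ℝ) :
    sampleVar n (fun i => a + c * w i) = c^2 * sampleVar n w := by
  rcases Nat.eq_zero_or_pos n with hn | hn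
  · subst hn
    simp [sampleVar]
  have hn0 : (n:ℝ) ≠ 0 := Nat.cast_ne_zero.mpr hn.ne'
  unfold sampleVar
  have hsum : (∑ j : Fin n, (a + c * w j)) = n * a + c * ∑ j, w j := by
    rw [Finset.sum_add_distrib, ← Finset.mul_sum]
    simp [Finset.card_univ, mul_comm]
  rw [hsum]
  have hterm : ∀ i : Fin n,
      (a + c * w i - ((n:ℝ) * a + c * ∑ j, w j) / n) ^ 2
        = c^2 * (w i - (∑ j, w j) / n) ^ 2 := by
    intro i
    have : a + c * w i - ((n:ℝ) * a + c * ∑ j, w j) / n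
        = c * (w i - (∑ j, w j) / n) := by
      field_simp
      ring
    rw [this]
    ring
  simp_rw [hterm]
  rw [← Finset.mul_sum]
  ring

lemma ega_sampleVar_eq (n : ℕ) (hn : 2 ≤ n) (w : Fin n → ℝ) :
    sampleVar n w = ((∑ i, (w i)^2) - (∑ i, w i)^2 / n) / ((n:ℝ)-1) := by
  have hn0 : (n:ℝ) ≠ 0 := Nat.cast_ne_zero.mpr (by omega)
  have hn1 : (n:ℝ) - 1 ≠ 0 := by
    have : (2:ℝ) ≤ (n:ℝ) := by exact_mod_cast hn
    intro h; linarith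
  unfold sampleVar
  set S := ∑ i, w i with hS
  have hterm : ∀ i : Fin n, (w i - S / n) ^ 2
      = (w i)^2 - 2*(S/(n:ℝ))*(w i) + (S/(n:ℝ))^2 := by
    intro i; ring
  simp_rw [hterm]
  rw [Finset.sum_add_distrib, Finset.sum_sub_distrib, ← Finset.mul_sum, Finset.sum_const,
    Finset.card_univ, Fintype.card_fin, nsmul_eq_mul]
  rw [← hS]
  field_simp
  ring

set_option maxHeartbeats 1000000 in
/-- Consistency of the truncated estimator `ρ̂ = (1 - s_n²)·I(s_n² < 1)`. -/
theorem stmt7 {Ω : Type*} [MeasureSpace Ω] [IsProbabilityMeasure (ℙ : Measure Ω)]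
    (ρ : ℝ) (hρ0 : 0 < ρ) (hρ1 : ρ < 1)
    (X : (n : ℕ) → Fin n → Ω → ℝ) (hX : ∀ n, IsEquicorrGaussian n ρ (X n)) :
    TendstoInMeasure ℙ
      (fun n ω => (1 - sampleVar n (fun i => X n i ω)) *
        (if sampleVar n (fun i => X n i ω) < 1 then (1 : ℝ) else 0))
      atTop (fun _ => ρ) := by
  choose Z hind hmap hmeas hform using hX
  rw [tendstoInMeasure_iff_dist]
  intro ε hε
  have h1ρ : 0 < 1 - ρ := by linarith
  set δ : ℝ := min ε ρ with hδdef
  have hδ : 0 < δ := lt_min hε hρ0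
  set δ' : ℝ := δ / (1 - ρ) with hδ'def
  have hδ' : 0 < δ' := div_pos hδ h1ρ
  set C : ℝ := 18*(ega_m4-1)/δ'^2 + 3/δ' with hCdef
  have hm4 : (0:ℝ) ≤ ega_m4 - 1 := by linarith [ega_m4_ge_one]
  have key : ∀ n : ℕ, 2 ≤ n → 1 < δ'*((n:ℝ)-1)/3 →
      ℙ {ω | ε ≤ dist ((1 - sampleVar n (fun i => X n i ω)) *
        (if sampleVar n (fun i => X n i ω) < 1 then (1:ℝ) else 0)) ρ}
      ≤ ENNReal.ofReal (C / ((n:ℝ)-1)) := by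
    intro n hn2 ha1
    set a : ℝ := δ'*((n:ℝ)-1)/3 with hadef
    have ha0 : 0 < a := lt_trans one_pos ha1
    have hn2' : (2:ℝ) ≤ (n:ℝ) := by exact_mod_cast hn2
    have hn0 : (0:ℝ) < (n:ℝ) := by linarith
    have hn1 : (0:ℝ) < (n:ℝ) - 1 := by linarith
    set W : ℕ → Ω → ℝ := fun i => Z n (i+1) with hWdef
    have hWm : ∀ i, Measurable (W i) := fun i => hmeas n (i+1)
    have hWmap : ∀ i, Measure.map (W i) ℙ = gaussianReal 0 1 := fun i => hmap n (i+1)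
    set T : Ω → ℝ := ∑ i ∈ Finset.range n, (fun ω => W i ω ^ 2) with hTdef
    set S : Ω → ℝ := ∑ i ∈ Finset.range n, W i with hSdef
    have hTapp : ∀ ω, T ω = ∑ i ∈ Finset.range n, W i ω ^ 2 := fun ω => by
      rw [hTdef]; simp [Finset.sum_apply]
    have hSapp : ∀ ω, S ω = ∑ i ∈ Finset.range n, W i ω := fun ω => by
      rw [hSdef]; simp [Finset.sum_apply]
    have hT2 : MemLp T 2 ℙ :=
      memLp_finset_sum' _ (fun i _ => ega_Wsq_memℒp2 (hWm i) (hWmap i))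
    have hS2 : MemLp S 2 ℙ :=
      memLp_finset_sum' _ (fun i _ => ega_W_memℒp2 (hWm i) (hWmap i))
    have hET : ℙ[T] = (n:ℝ) := by
      have h1 : ∫ ω, T ω ∂ℙ = ∑ i ∈ Finset.range n, ∫ ω, W i ω ^ 2 ∂ℙ := by
        simp_rw [hTapp]
        exact integral_finset_sum _
          (fun i _ => ((ega_Wsq_memℒp2 (hWm i) (hWmap i)).integrable one_le_two))
      rw [h1]
      have h2 : ∀ i ∈ Finset.range n, ∫ ω, W i ω ^ 2 ∂ℙ = 1 :=
        fun i _ => ega_Wsq_mean (hWm i) (hWmap i)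
      rw [Finset.sum_congr rfl h2]
      simp
    have hES : ℙ[S] = 0 := by
      have h1 : ∫ ω, S ω ∂ℙ = ∑ i ∈ Finset.range n, ∫ ω, W i ω ∂ℙ := by
        simp_rw [hSapp]
        exact integral_finset_sum _
          (fun i _ => ((ega_W_memℒp2 (hWm i) (hWmap i)).integrable one_le_two))
      rw [h1]
      have h2 : ∀ i ∈ Finset.range n, ∫ ω, W i ω ∂ℙ = 0 :=
        fun i _ => ega_W_mean (hWm i) (hWmap i)
      rw [Finset.sum_congr rfl h2]
      simp
    have hvarT : variance T ℙ = (n:ℝ) * (ega_m4 - 1) := by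
      rw [hTdef]
      rw [IndepFun.variance_sum (fun i _ => ega_Wsq_memℒp2 (hWm i) (hWmap i))
        (fun i _ j _ hij => by
          exact ((hind n).indepFun (show i+1 ≠ j+1 by omega)).comp
            (measurable_id.pow_const 2) (measurable_id.pow_const 2))]
      have h2 : ∀ i ∈ Finset.range n, variance (fun ω => W i ω ^ 2) ℙ = ega_m4 - 1 :=
        fun i _ => ega_Wsq_var (hWm i) (hWmap i)
      rw [Finset.sum_congr rfl h2]
      simp [mul_comm]
      ring
    have hvarS : variance S ℙ = (n:ℝ) := by
      rw [hSdef]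
      rw [IndepFun.variance_sum (fun i _ => ega_W_memℒp2 (hWm i) (hWmap i))
        (fun i _ j _ hij => (hind n).indepFun (show i+1 ≠ j+1 by omega))]
      have h2 : ∀ i ∈ Finset.range n, variance (W i) ℙ = 1 :=
        fun i _ => ega_W_var (hWm i) (hWmap i)
      rw [Finset.sum_congr rfl h2]
      simp
    have chebT := meas_ge_le_variance_div_sq (μ := ℙ) hT2 ha0
    rw [hET, hvarT] at chebT
    have hna : 0 < (n:ℝ) * a := by positivity
    have hsqpos : 0 < Real.sqrt ((n:ℝ)*a) := Real.sqrt_pos.mpr hna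
    have chebS := meas_ge_le_variance_div_sq (μ := ℙ) hS2 hsqpos
    rw [hES, hvarS, Real.sq_sqrt hna.le] at chebS
    -- event inclusion
    have hincl : {ω | ε ≤ dist ((1 - sampleVar n (fun i => X n i ω)) *
          (if sampleVar n (fun i => X n i ω) < 1 then (1:ℝ) else 0)) ρ}
        ⊆ {ω | a ≤ |T ω - (n:ℝ)|} ∪ {ω | Real.sqrt ((n:ℝ)*a) ≤ |S ω - 0|} := by
      intro ω hω
      simp only [Set.mem_setOf_eq] at hω
      set s : ℝ := sampleVar n (fun i => X n i ω) with hsdef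
      set v : ℝ := sampleVar n (fun i : Fin n => W (i:ℕ) ω) with hvdef
      have hsv : s = (1-ρ) * v := by
        rw [hsdef]
        have hxf : (fun i : Fin n => X n i ω)
            = fun i : Fin n => Real.sqrt ρ * Z n 0 ω + Real.sqrt (1-ρ) * W (i:ℕ) ω :=
          funext (fun i => hform n i ω)
        rw [hxf, ega_sampleVar_shift n (Real.sqrt ρ * Z n 0 ω) (Real.sqrt (1-ρ)), Real.sq_sqrt h1ρ.le]
      -- step 2 : δ ≤ |s - (1-ρ)|
      have step2 : δ ≤ |s - (1-ρ)| := by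
        by_cases h : s < 1
        · rw [if_pos h, mul_one, Real.dist_eq] at hω
          have : |s - (1-ρ)| = |1 - s - ρ| := by
            rw [show s - (1-ρ) = -(1 - s - ρ) by ring, abs_neg]
          rw [this]
          exact le_trans (min_le_left _ _) hω
        · push_neg at h
          have h1 : ρ ≤ s - (1-ρ) := by linarith
          calc δ ≤ ρ := min_le_right _ _
            _ ≤ s - (1-ρ) := h1
            _ ≤ |s - (1-ρ)| := le_abs_self _
      -- step 3 : δ' ≤ |v - 1|
      have step3 : δ' ≤ |v - 1| := by
        rw [hsv, show (1-ρ)*v - (1-ρ) = (1-ρ)*(v-1) by ring, abs_mul,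
          abs_of_pos h1ρ] at step2
        rw [hδ'def, div_le_iff₀ h1ρ]
        linarith [step2]
      -- step 4 : the decomposition
      have hvformula : v = ((T ω) - (S ω)^2/(n:ℝ))/((n:ℝ)-1) := by
        rw [hvdef, ega_sampleVar_eq n hn2]
        congr 2
        · rw [hTapp ω, Finset.sum_range]
        · rw [hSapp ω, Finset.sum_range]
      have hvlin : (v - 1)*((n:ℝ)-1) = T ω - (S ω)^2/(n:ℝ) - ((n:ℝ)-1) := by
        rw [hvformula]
        field_simp
      have step5 : δ'*((n:ℝ)-1) ≤ |T ω - (n:ℝ)| + 1 + (S ω)^2/(n:ℝ) := by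
        have h1 : δ'*((n:ℝ)-1) ≤ |v-1| * ((n:ℝ)-1) :=
          mul_le_mul_of_nonneg_right step3 hn1.le
        have h2 : |v-1| * ((n:ℝ)-1) = |(v-1)*((n:ℝ)-1)| := by
          rw [abs_mul, abs_of_pos hn1]
        have h3 : |(v-1)*((n:ℝ)-1)| ≤ |T ω - (n:ℝ)| + 1 + (S ω)^2/(n:ℝ) := by
          rw [hvlin]
          have hd : T ω - (S ω)^2/(n:ℝ) - ((n:ℝ)-1)
              = (T ω - (n:ℝ)) + (1 - (S ω)^2/(n:ℝ)) := by ring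
          rw [hd]
          have hq : (0:ℝ) ≤ (S ω)^2/(n:ℝ) := by positivity
          have habs : |1 - (S ω)^2/(n:ℝ)| ≤ 1 + (S ω)^2/(n:ℝ) := by
            rw [abs_le]; constructor <;> [linarith; linarith]
          calc |(T ω - (n:ℝ)) + (1 - (S ω)^2/(n:ℝ))|
              ≤ |T ω - (n:ℝ)| + |1 - (S ω)^2/(n:ℝ)| := abs_add_le _ _
            _ ≤ |T ω - (n:ℝ)| + (1 + (S ω)^2/(n:ℝ)) := by linarith [habs]
            _ = |T ω - (n:ℝ)| + 1 + (S ω)^2/(n:ℝ) := by ring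
        exact (h1.trans_eq h2).trans h3
      -- conclude the disjunction
      have h3a : 3*a = δ'*((n:ℝ)-1) := by rw [hadef]; ring
      by_contra hcon
      simp only [Set.mem_union, Set.mem_setOf_eq, not_or, not_le] at hcon
      obtain ⟨hc1, hc2⟩ := hcon
      have hc2' : (S ω)^2 < (n:ℝ)*a := by
        have := hc2
        rw [sub_zero] at this
        nlinarith [Real.sq_sqrt hna.le, abs_nonneg (S ω), sq_abs (S ω)]
      have hc3 : (S ω)^2/(n:ℝ) < a := by
        rw [div_lt_iff₀ hn0]
        linarith [hc2']
      linarith [step5, h3a, ha1]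
    -- assemble
    calc ℙ {ω | ε ≤ dist ((1 - sampleVar n (fun i => X n i ω)) *
          (if sampleVar n (fun i => X n i ω) < 1 then (1:ℝ) else 0)) ρ}
        ≤ ℙ ({ω | a ≤ |T ω - (n:ℝ)|} ∪ {ω | Real.sqrt ((n:ℝ)*a) ≤ |S ω - 0|}) :=
          measure_mono hincl
      _ ≤ ℙ {ω | a ≤ |T ω - (n:ℝ)|} + ℙ {ω | Real.sqrt ((n:ℝ)*a) ≤ |S ω - 0|} :=
          measure_union_le _ _
      _ ≤ ENNReal.ofReal ((n:ℝ) * (ega_m4 - 1) / a^2)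
          + ENNReal.ofReal ((n:ℝ) / ((n:ℝ)*a)) := add_le_add chebT chebS
      _ = ENNReal.ofReal ((n:ℝ) * (ega_m4 - 1) / a^2 + (n:ℝ) / ((n:ℝ)*a)) := by
          rw [ENNReal.ofReal_add (by positivity) (by positivity)]
      _ ≤ ENNReal.ofReal (C / ((n:ℝ)-1)) := by
          apply ENNReal.ofReal_le_ofReal
          have e2 : (n:ℝ)/((n:ℝ)*a) = 1/a := by
            rw [div_mul_eq_div_div_swap, div_right_comm, div_self hn0.ne']
          have t2 : (1:ℝ)/a = (3/δ')/((n:ℝ)-1) := by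
            rw [hadef]; field_simp
          have t1 : (n:ℝ)*(ega_m4-1)/a^2 ≤ (18*(ega_m4-1)/δ'^2)/((n:ℝ)-1) := by
            have ha2 : a^2 = δ'^2*((n:ℝ)-1)^2/9 := by rw [hadef]; ring
            rw [ha2, div_le_div_iff₀ (by positivity) hn1]
            have hrw : 18*(ega_m4-1)/δ'^2 * (δ'^2*((n:ℝ)-1)^2/9)
                = 2*(ega_m4-1)*((n:ℝ)-1)^2 := by
              field_simp
              ring
            rw [hrw]
            nlinarith [mul_nonneg (mul_nonneg hm4 hn1.le) (by linarith : (0:ℝ) ≤ (n:ℝ)-2)]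
          have hCsplit : C/((n:ℝ)-1)
              = (18*(ega_m4-1)/δ'^2)/((n:ℝ)-1) + (3/δ')/((n:ℝ)-1) := by
            rw [hCdef, add_div]
          rw [hCsplit, e2, t2]
          exact add_le_add t1 le_rfl
  -- squeeze
  have htop' : Tendsto (fun n : ℕ => (n:ℝ)-1) atTop atTop := by
    simpa [sub_eq_add_neg] using
      tendsto_atTop_add_const_right atTop (-1 : ℝ) tendsto_natCast_atTop_atTop
  have hupper : Tendsto (fun n : ℕ => ENNReal.ofReal (C/((n:ℝ)-1))) atTop (nhds 0) := by
    have hreal : Tendsto (fun n : ℕ => C/((n:ℝ)-1)) atTop (nhds 0) :=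
      Tendsto.div_atTop tendsto_const_nhds htop'
    have := ENNReal.tendsto_ofReal hreal
    simpa using this
  have heva : ∀ᶠ n : ℕ in atTop, 1 < δ'*((n:ℝ)-1)/3 := by
    have h1 : Tendsto (fun n : ℕ => δ'*((n:ℝ)-1)) atTop atTop :=
      Tendsto.const_mul_atTop hδ' htop'
    have h2 : Tendsto (fun n : ℕ => δ'*((n:ℝ)-1)/3) atTop atTop :=
      h1.atTop_div_const (by norm_num)
    exact h2.eventually_gt_atTop 1
  apply tendsto_of_tendsto_of_tendsto_of_le_of_le' tendsto_const_nhds hupper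
  · exact Eventually.of_forall (fun n => zero_le)
  · filter_upwards [eventually_ge_atTop 2, heva] with n h2 h3
    exact key n h2 h3
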